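/- Let π : ℝ^d → ℝ be C² and let f : ℝ^d → ℝ be C² with compact support. Then ∫_{ℝ^d} |∇(πf)(x)|² dx + ∫_{ℝ^d} Δπ(x) · π(x) f(x)² dx = ∫_{ℝ^d} π(x)² |∇f(x)|² dx. -/

import Mathlib

open MeasureTheory Filter

noncomputable def lap {d : ℕ} (f : EuclideanSpace ℝ (Fin d) → ℝ)
    (x : EuclideanSpace ℝ (Fin d)) : ℝ :=
  ∑ i, fderiv ℝ (fun y => fderiv ℝ f y (EuclideanSpace.single i 1)) x
    (EuclideanSpace.single i 1)

open Metric Set Topology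

variable {d : ℕ}

-- key lemma: integral of a directional derivative of a C¹ compactly supported function is 0
lemma key_integral_zero (h : EuclideanSpace ℝ (Fin d) → ℝ) (hh : ContDiff ℝ 1 h)
    (hc : HasCompactSupport h) (v : EuclideanSpace ℝ (Fin d)) :
    ∫ x, fderiv ℝ h x v = 0 := by
  have hc' : HasCompactSupport (fderiv ℝ h) := hc.fderiv (𝕜 := ℝ)
  obtain ⟨C, hC⟩ : ∃ C, ∀ x, ‖fderiv ℝ h x‖ ≤ C :=
    hc'.exists_bound_of_continuous (hh.continuous_fderiv one_ne_zero)
  set K : Set (EuclideanSpace ℝ (Fin d)) := cthickening ‖v‖ (tsupport (fderiv ℝ h)) with hK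
  have K_compact : IsCompact K := hc'.cthickening
  have h1 : ∀ᶠ t in 𝓝 (0:ℝ), AEStronglyMeasurable (fun x => h (x + t • v)) volume :=
    Eventually.of_forall fun t =>
      (hh.continuous.comp (continuous_add_right _)).aestronglyMeasurable
  have h2 : Integrable (fun x => h (x + (0:ℝ) • v)) volume := by
    simpa using hh.continuous.integrable_of_hasCompactSupport hc
  have h3 : AEStronglyMeasurable (fun x => fderiv ℝ h (x + (0:ℝ) • v) v) volume := by
    apply Continuous.aestronglyMeasurable
    exact ((hh.continuous_fderiv_apply one_ne_zero).comp
      (((continuous_add_right _).prodMk continuous_const)))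
  have h4 : ∀ᵐ x : EuclideanSpace ℝ (Fin d), ∀ t ∈ ball (0:ℝ) 1,
      ‖fderiv ℝ h (x + t • v) v‖ ≤ K.indicator (fun _ => C * ‖v‖) x := by
    filter_upwards with x
    intro t ht
    by_cases hx : x ∈ K
    · rw [indicator_of_mem hx]
      calc ‖fderiv ℝ h (x + t • v) v‖ ≤ ‖fderiv ℝ h (x + t • v)‖ * ‖v‖ :=
            (fderiv ℝ h (x + t • v)).le_opNorm v
        _ ≤ C * ‖v‖ := mul_le_mul_of_nonneg_right (hC _) (norm_nonneg v)
    · have : fderiv ℝ h (x + t • v) = 0 := by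
        rw [← Function.notMem_support]
        intro hmem
        apply hx
        apply mem_cthickening_of_dist_le _ _ (‖v‖) _ (subset_tsupport _ hmem)
        simp only [dist_eq_norm, sub_add_cancel_left, norm_neg, norm_smul, Real.norm_eq_abs]
        simp only [mem_ball, dist_zero_right, Real.norm_eq_abs] at ht
        exact mul_le_of_le_one_left (norm_nonneg v) ht.le
      rw [this, indicator_of_notMem hx]
      simp
  have h5 : Integrable (K.indicator (fun _ => C * ‖v‖)) volume := by
    rw [integrable_indicator_iff K_compact.measurableSet]
    exact integrableOn_const K_compact.measure_lt_top.ne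
  have h6 : ∀ᵐ x : EuclideanSpace ℝ (Fin d), ∀ t ∈ ball (0:ℝ) 1,
      HasDerivAt (fun s => h (x + s • v)) (fderiv ℝ h (x + t • v) v) t := by
    filter_upwards with x
    intro t _
    have hd : HasFDerivAt h (fderiv ℝ h (x + t • v)) (x + t • v) :=
      (hh.differentiable one_ne_zero (x + t • v)).hasFDerivAt
    have hγ : HasDerivAt (fun s : ℝ => x + s • v) v t := by
      simpa using ((hasDerivAt_id t).smul_const v).const_add x
    exact hd.comp_hasDerivAt t hγ
  have main := hasDerivAt_integral_of_dominated_loc_of_deriv_le (ball_mem_nhds 0 one_pos) h1 h2 h3 h4 h5 h6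
  have heq : (fun t : ℝ => ∫ x, h (x + t • v)) = fun _ => ∫ x, h x :=
    funext fun t => integral_add_right_eq_self _ _
  rw [heq] at main
  have := main.2.unique (hasDerivAt_const _ _)
  simpa using this

lemma norm_gradient_sq (q : EuclideanSpace ℝ (Fin d) → ℝ) (x : EuclideanSpace ℝ (Fin d)) :
    ‖gradient q x‖ ^ 2 = ∑ i, fderiv ℝ q x (EuclideanSpace.single i 1) ^ 2 := by
  have h1 : ∀ i : Fin d, gradient q x i = fderiv ℝ q x (EuclideanSpace.single i 1) := by
    intro i
    have h2 := @InnerProductSpace.toDual_symm_apply ℝ (EuclideanSpace ℝ (Fin d)) _ _ _ _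
      (EuclideanSpace.single i 1) (fderiv ℝ q x)
    rw [show gradient q x = (InnerProductSpace.toDual ℝ _).symm (fderiv ℝ q x) from rfl]
    rw [← h2, real_inner_comm, EuclideanSpace.inner_single_left]
    simp
  rw [EuclideanSpace.norm_eq, Real.sq_sqrt (by positivity)]
  exact Finset.sum_congr rfl fun i _ => by rw [Real.norm_eq_abs, sq_abs, h1 i]

lemma pointwise_identity (p f : EuclideanSpace ℝ (Fin d) → ℝ)
    (hp : ContDiff ℝ 2 p) (hf : ContDiff ℝ 2 f) (x : EuclideanSpace ℝ (Fin d)) :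
    ‖gradient (fun y => p y * f y) x‖ ^ 2 + lap p x * (p x * f x ^ 2) =
      p x ^ 2 * ‖gradient f x‖ ^ 2 +
        ∑ i, fderiv ℝ (fun y => p y * f y ^ 2 * fderiv ℝ p y (EuclideanSpace.single i 1)) x
          (EuclideanSpace.single i 1) := by
  have hpd : ∀ y, DifferentiableAt ℝ p y := fun y => (hp.differentiable two_ne_zero).differentiableAt
  have hfd : ∀ y, DifferentiableAt ℝ f y := fun y => (hf.differentiable two_ne_zero).differentiableAt
  have hg : ∀ i : Fin d,
      DifferentiableAt ℝ (fun y => fderiv ℝ p y (EuclideanSpace.single i 1)) x := by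
    intro i
    exact (((hp.fderiv_right (m := 1) (by norm_num)).clm_apply
      contDiff_const).differentiable one_ne_zero).differentiableAt
  have hf2 : ∀ y, DifferentiableAt ℝ (fun z => f z ^ 2) y := fun y => (hfd y).pow 2
  have hpf2 : ∀ y, DifferentiableAt ℝ (fun z => p z * f z ^ 2) y := fun y => (hpd y).mul (hf2 y)
  have e1 : fderiv ℝ (fun y => p y * f y) x = p x • fderiv ℝ f x + f x • fderiv ℝ p x :=
    fderiv_mul (hpd x) (hfd x)
  have e4 : fderiv ℝ (fun z => f z ^ 2) x = (2 * f x) • fderiv ℝ f x := by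
    have : (fun z => f z ^ 2) = fun z => f z * f z := by funext z; ring
    rw [this, fderiv_fun_mul (hfd x) (hfd x), two_mul, add_smul]
  have e3 : fderiv ℝ (fun z => p z * f z ^ 2) x
      = p x • fderiv ℝ (fun z => f z ^ 2) x + (f x ^ 2) • fderiv ℝ p x :=
    fderiv_mul (hpd x) (hf2 x)
  have e2 : ∀ i : Fin d,
      fderiv ℝ (fun y => p y * f y ^ 2 * fderiv ℝ p y (EuclideanSpace.single i 1)) x
      = (p x * f x ^ 2) • fderiv ℝ (fun y => fderiv ℝ p y (EuclideanSpace.single i 1)) x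
        + (fderiv ℝ p x (EuclideanSpace.single i 1)) • fderiv ℝ (fun z => p z * f z ^ 2) x :=
    fun i => fderiv_mul (hpf2 x) (hg i)
  simp only [norm_gradient_sq, lap, e1, e2, e3, e4]
  simp only [ContinuousLinearMap.add_apply, ContinuousLinearMap.smul_apply, smul_eq_mul]
  simp only [Finset.sum_mul, Finset.mul_sum, ← Finset.sum_add_distrib]
  exact Finset.sum_congr rfl fun i _ => by ring

theorem stmt_10 {d : ℕ} (p f : EuclideanSpace ℝ (Fin d) → ℝ)
    (hp : ContDiff ℝ 2 p) (hf : ContDiff ℝ 2 f)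
    (hsupp : HasCompactSupport f) :
    (∫ x, ‖gradient (fun y => p y * f y) x‖ ^ 2) +
        (∫ x, lap p x * (p x * f x ^ 2)) =
      ∫ x, p x ^ 2 * ‖gradient f x‖ ^ 2 := by
  have hp1 : ContDiff ℝ 1 p := hp.of_le one_le_two
  have hf1 : ContDiff ℝ 1 f := hf.of_le one_le_two
  have hpfs : HasCompactSupport (fun y => p y * f y) := hsupp.mul_left
  have hpf1 : ContDiff ℝ 1 (fun y => p y * f y) := hp1.mul hf1
  have hf2s : HasCompactSupport (fun y => f y ^ 2) :=
    hsupp.comp_left (g := fun t : ℝ => t ^ 2) (by simp)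
  have hgradcont : ∀ q : EuclideanSpace ℝ (Fin d) → ℝ, ContDiff ℝ 1 q →
      Continuous (fun x => gradient q x) := fun q hq =>
    (LinearIsometryEquiv.continuous _).comp (hq.continuous_fderiv one_ne_zero)
  have hgi : ∀ i : Fin d,
      ContDiff ℝ 1 (fun y => fderiv ℝ p y (EuclideanSpace.single i 1)) := fun i =>
    (hp.fderiv_right (m := 1) (by norm_num)).clm_apply contDiff_const
  have hlapcont : Continuous (lap p) := by
    unfold lap
    apply continuous_finset_sum
    intro i _
    exact ((hgi i).continuous_fderiv_apply one_ne_zero).comp (continuous_id.prodMk continuous_const)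
  have hintA : Integrable (fun x => ‖gradient (fun y => p y * f y) x‖ ^ 2) volume := by
    apply Continuous.integrable_of_hasCompactSupport
    · exact (hgradcont _ hpf1).norm.pow 2
    · exact (hpfs.fderiv (𝕜 := ℝ)).comp_left
        (g := fun L => ‖(InnerProductSpace.toDual ℝ _).symm L‖ ^ 2) (by simp)
  have hintB : Integrable (fun x => lap p x * (p x * f x ^ 2)) volume := by
    apply Continuous.integrable_of_hasCompactSupport
    · exact hlapcont.mul (hp.continuous.mul (hf.continuous.pow 2))
    · exact ((hf2s.mul_left (f := p)).mul_left (f := lap p))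
  have hintC : Integrable (fun x => p x ^ 2 * ‖gradient f x‖ ^ 2) volume := by
    apply Continuous.integrable_of_hasCompactSupport
    · exact (hp.continuous.pow 2).mul ((hgradcont _ hf1).norm.pow 2)
    · exact ((hsupp.fderiv (𝕜 := ℝ)).comp_left
        (g := fun L => ‖(InnerProductSpace.toDual ℝ _).symm L‖ ^ 2) (by simp)).mul_left
  have hhi : ∀ i : Fin d,
      ContDiff ℝ 1 (fun y => p y * f y ^ 2 * fderiv ℝ p y (EuclideanSpace.single i 1)) :=
    fun i => (hp1.mul (hf1.pow 2)).mul (hgi i)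
  have hsi : ∀ i : Fin d,
      HasCompactSupport (fun y => p y * f y ^ 2 * fderiv ℝ p y (EuclideanSpace.single i 1)) :=
    fun i => (hf2s.mul_left (f := p)).mul_right
  have hDint : ∀ i : Fin d, Integrable (fun x =>
      fderiv ℝ (fun y => p y * f y ^ 2 * fderiv ℝ p y (EuclideanSpace.single i 1)) x
        (EuclideanSpace.single i 1)) volume := by
    intro i
    apply Continuous.integrable_of_hasCompactSupport
    · exact ((hhi i).continuous_fderiv_apply one_ne_zero).comp (continuous_id.prodMk continuous_const)
    · exact (hsi i).fderiv_apply (𝕜 := ℝ) _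
  have key : ∫ x, (‖gradient (fun y => p y * f y) x‖ ^ 2 + lap p x * (p x * f x ^ 2)) =
      ∫ x, (p x ^ 2 * ‖gradient f x‖ ^ 2 +
        ∑ i, fderiv ℝ (fun y => p y * f y ^ 2 * fderiv ℝ p y (EuclideanSpace.single i 1)) x
          (EuclideanSpace.single i 1)) := by
    apply integral_congr_ae
    filter_upwards with x
    exact pointwise_identity p f hp hf x
  rw [integral_add hintA hintB,
      integral_add hintC (integrable_finset_sum _ fun i _ => hDint i),
      integral_finset_sum _ (fun i _ => hDint i)] at key
  have hz : (∑ i : Fin d, ∫ x,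
      fderiv ℝ (fun y => p y * f y ^ 2 * fderiv ℝ p y (EuclideanSpace.single i 1)) x
        (EuclideanSpace.single i 1)) = 0 :=
    Finset.sum_eq_zero fun i _ => key_integral_zero _ (hhi i) (hsi i) _
  rw [hz, add_zero] at key
  exact key
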